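/- Let n ≥ 2 and m ≥ 1 be integers. For all m-diagonals D and D′ of the regular (nm+2)-gon, there is an arrow from D to D′ in Γ^m_{A_{n−1}} if and only if there is an arrow from τ_m(D′) to D. Consequently (Γ^m_{A_{n−1}}, τ_m) is a stable translation quiver. -/
import Mathlib


/-- An `m`-diagonal of the regular `(n*m+2)`-gon, with vertices labelled by
`ZMod (n*m+2)`: an unordered pair of the form `{i, i+k*m+1}` with `1 ≤ k ≤ n-1`. -/
def IsMDiagonal (n m : ℕ) (p : Sym2 (ZMod (n*m+2))) : Prop :=
  ∃ (i : ZMod (n*m+2)) (k : ℕ), 1 ≤ k ∧ k ≤ n - 1 ∧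
    p = s(i, i + ((k*m+1 : ℕ) : ZMod (n*m+2)))

/-- The translation `τ_m`, sending `{i,j}` to `{i-m, j-m}`. -/
def tauM (n m : ℕ) : Sym2 (ZMod (n*m+2)) → Sym2 (ZMod (n*m+2)) :=
  Sym2.map (fun x => x - (m : ZMod (n*m+2)))

/-- There is an arrow `D → D'` in `Γ^m_{A_{n-1}}`: both `D` and `D'` are
`m`-diagonals, and `D'` is obtained from `D = {a,b}` by replacing the
endpoint `b` by `b+m`. -/
def HasArrow (n m : ℕ) (D D' : Sym2 (ZMod (n*m+2))) : Prop :=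
  IsMDiagonal n m D ∧ IsMDiagonal n m D' ∧
    ∃ a b : ZMod (n*m+2), D = s(a, b) ∧ D' = s(a, b + (m : ZMod (n*m+2)))

lemma tau_pair (n m : ℕ) (x y : ZMod (n*m+2)) :
    tauM n m s(x, y) = s(x - m, y - m) := rfl

lemma diag_tau (n m : ℕ) (p : Sym2 (ZMod (n*m+2))) (h : IsMDiagonal n m p) :
    IsMDiagonal n m (tauM n m p) := by
  obtain ⟨i, k, h1, h2, rfl⟩ := h
  exact ⟨i - m, k, h1, h2, by rw [tau_pair, sub_add_eq_add_sub]⟩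

lemma diag_shift (n m : ℕ) (p : Sym2 (ZMod (n*m+2))) (h : IsMDiagonal n m p) :
    IsMDiagonal n m (Sym2.map (fun x => x + (m : ZMod (n*m+2))) p) := by
  obtain ⟨i, k, h1, h2, rfl⟩ := h
  refine ⟨i + m, k, h1, h2, ?_⟩
  show s(i + (m:ZMod (n*m+2)), i + _ + m) = _
  rw [add_right_comm]

lemma tau_inj (n m : ℕ) : Function.Injective (tauM n m) :=
  Sym2.map.injective (fun a b h => by simpa using sub_left_injective h)

lemma tau_shift (n m : ℕ) (p : Sym2 (ZMod (n*m+2))) :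
    tauM n m (Sym2.map (fun x => x + (m : ZMod (n*m+2))) p) = p := by
  induction p using Sym2.ind with
  | _ x y => simp [tauM]

/-- There is an arrow `D → D'` iff there is an arrow `τ_m(D') → D`; together
with the fact that `τ_m` is a bijection of the set of `m`-diagonals, this says
that `(Γ^m_{A_{n-1}}, τ_m)` is a stable translation quiver. -/
theorem stmt1 (n m : ℕ) (hn : 2 ≤ n) (hm : 1 ≤ m) :
    (∀ D D' : Sym2 (ZMod (n*m+2)), IsMDiagonal n m D → IsMDiagonal n m D' →
      (HasArrow n m D D' ↔ HasArrow n m (tauM n m D') D)) ∧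
    Set.BijOn (tauM n m) {p | IsMDiagonal n m p} {p | IsMDiagonal n m p} := by
  constructor
  · intro D D' hD hD'
    constructor
    · rintro ⟨-, -, a, b, rfl, rfl⟩
      refine ⟨diag_tau _ _ _ hD', hD, b, a - m, ?_, ?_⟩
      · rw [tau_pair, add_sub_cancel_right, Sym2.eq_swap]
      · rw [sub_add_cancel, Sym2.eq_swap]
    · rintro ⟨-, -, a, b, htau, rfl⟩
      have hD'eq : D' = s(a + m, b + m) := by
        apply tau_inj n m
        rw [tau_pair, add_sub_cancel_right, add_sub_cancel_right, htau]
      refine ⟨hD, hD', b + m, a, Sym2.eq_swap, ?_⟩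
      rw [hD'eq, Sym2.eq_swap]
  · refine ⟨fun p hp => diag_tau n m p hp, (tau_inj n m).injOn, fun p hp => ?_⟩
    exact ⟨Sym2.map (fun x => x + m) p, diag_shift n m p hp, tau_shift n m p⟩
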